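/- Given σ > 0, a d×d real symmetric positive definite matrix Σ₀, and vectors A₁,…,Aₙ ∈ ℝ^d with ‖A_t‖₂ ≤ κ for all t, define V_t = Σ_{ℓ=1}^{t−1} A_ℓ A_ℓᵀ and Σ_t = (Σ₀⁻¹ + σ⁻² V_t)⁻¹ for t = 1,…,n+1. If C > 0 satisfies λ_max(Σ₀) ≤ σ² C / κ², where λ_max denotes the largest eigenvalue, then Σ_{t=1}^n ‖A_t‖²_{Σ_t} ≤ σ² (1 + C) · log( det(Σ_{n+1}⁻¹) / det(Σ₁⁻¹) ), where Σ₁⁻¹ = Σ₀⁻¹. -/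

import Mathlib

open Finset Matrix

section Aux

variable {d : ℕ}

lemma psd_vecMulVec_self (u : Fin d → ℝ) : (Matrix.vecMulVec u u).PosSemidef := by
  have h : Matrix.vecMulVec u u = Matrix.replicateCol Unit u * (Matrix.replicateCol Unit u)ᴴ := by
    rw [Matrix.conjTranspose_replicateCol, Matrix.vecMulVec_eq Unit]
    simp
  rw [h]
  exact Matrix.posSemidef_self_mul_conjTranspose _

lemma psd_smul_aux {c : ℝ} (hc : 0 ≤ c) {B : Matrix (Fin d) (Fin d) ℝ}
    (hB : B.PosSemidef) : (c • B).PosSemidef := by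
  refine Matrix.PosSemidef.of_dotProduct_mulVec_nonneg ?_ fun x => ?_
  · show (c • B)ᴴ = c • B
    rw [Matrix.conjTranspose_smul, hB.1.eq, star_trivial]
  · rw [Matrix.smul_mulVec, dotProduct_smul]
    exact mul_nonneg hc (hB.dotProduct_mulVec_nonneg x)

lemma psd_sum_aux (s : Finset ℕ) (f : ℕ → Fin d → ℝ) :
    (∑ ℓ ∈ s, Matrix.vecMulVec (f ℓ) (f ℓ)).PosSemidef := by
  classical
  induction s using Finset.cons_induction with
  | empty => simpa using (Matrix.PosSemidef.zero (n := Fin d) (R := ℝ))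
  | cons a s ha ih =>
    rw [Finset.sum_cons]
    exact (psd_vecMulVec_self _).add ih

lemma dot_symm_aux {S : Matrix (Fin d) (Fin d) ℝ} (hS : S.IsHermitian)
    (u v : Fin d → ℝ) : u ⬝ᵥ S *ᵥ v = v ⬝ᵥ S *ᵥ u := by
  have hT : Sᵀ = S := by
    ext i j
    have := congrFun (congrFun hS.eq i) j
    simpa [Matrix.conjTranspose_apply] using this
  rw [Matrix.dotProduct_mulVec, ← Matrix.mulVec_transpose, hT, dotProduct_comm]

lemma quad_le_sup_eigenvalues {S : Matrix (Fin d) (Fin d) ℝ} (hS : S.IsHermitian)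
    (x : Fin d → ℝ) :
    x ⬝ᵥ S *ᵥ x ≤ (⨆ i, hS.eigenvalues i) * (x ⬝ᵥ x) := by
  set lmax := ⨆ i, hS.eigenvalues i with hlm
  have hle : ∀ i, hS.eigenvalues i ≤ lmax := fun i =>
    le_ciSup (Set.Finite.bddAbove (Set.finite_range _)) i
  have hpsd : (lmax • (1 : Matrix (Fin d) (Fin d) ℝ) - S).PosSemidef := by
    have hU : (hS.eigenvectorUnitary : Matrix (Fin d) (Fin d) ℝ) *
        (hS.eigenvectorUnitary : Matrix (Fin d) (Fin d) ℝ)ᴴ = 1 :=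
      Matrix.mem_unitaryGroup_iff.mp hS.eigenvectorUnitary.2
    have hdiag : Matrix.diagonal (RCLike.ofReal ∘ hS.eigenvalues) =
        Matrix.diagonal hS.eigenvalues := by
      simp [RCLike.ofReal_real_eq_id]
    have key : lmax • (1 : Matrix (Fin d) (Fin d) ℝ) - S =
        (hS.eigenvectorUnitary : Matrix (Fin d) (Fin d) ℝ) *
          Matrix.diagonal (fun i => lmax - hS.eigenvalues i) *
          (hS.eigenvectorUnitary : Matrix (Fin d) (Fin d) ℝ)ᴴ := by
      have hdd : Matrix.diagonal (fun i => lmax - hS.eigenvalues i) =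
          lmax • (1 : Matrix (Fin d) (Fin d) ℝ) - Matrix.diagonal hS.eigenvalues := by
        ext i j
        rcases eq_or_ne i j with rfl | hij
        · simp [Matrix.diagonal_apply_eq, Matrix.one_apply_eq]
        · simp [Matrix.diagonal_apply_ne _ hij, Matrix.one_apply_ne hij]
      have hSeq : S = (hS.eigenvectorUnitary : Matrix (Fin d) (Fin d) ℝ) *
          Matrix.diagonal hS.eigenvalues *
          (hS.eigenvectorUnitary : Matrix (Fin d) (Fin d) ℝ)ᴴ := by
        conv_lhs => rw [hS.spectral_theorem]
        rw [hdiag, Unitary.conjStarAlgAut_apply, Matrix.star_eq_conjTranspose]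
      rw [hdd, Matrix.mul_sub, Matrix.sub_mul, mul_smul_comm, Matrix.mul_one,
        smul_mul_assoc, hU, ← hSeq]
    rw [key]
    have hd0 : (0 : Fin d → ℝ) ≤ fun i => lmax - hS.eigenvalues i := by
      intro i
      simpa using sub_nonneg.2 (hle i)
    exact (Matrix.PosSemidef.diagonal hd0).mul_mul_conjTranspose_same _
  have h0 := hpsd.dotProduct_mulVec_nonneg x
  have hsx : star x = x := by simp
  rw [hsx, Matrix.sub_mulVec, Matrix.smul_mulVec, Matrix.one_mulVec,
    dotProduct_sub, dotProduct_smul] at h0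
  have : lmax • (x ⬝ᵥ x) = lmax * (x ⬝ᵥ x) := rfl
  linarith [h0, this.symm.le]

lemma le_log_bound {x C : ℝ} (hx : 0 ≤ x) (hxC : x ≤ C) :
    x ≤ (1 + C) * Real.log (1 + x) := by
  have h1x : (0:ℝ) < 1 + x := by linarith
  have h1 : 1 - (1+x)⁻¹ ≤ Real.log (1+x) := by
    have h2 := Real.add_one_le_exp (-Real.log (1+x))
    rw [Real.exp_neg, Real.exp_log h1x] at h2
    linarith
  have h3 : 1 - (1+x)⁻¹ = x / (1+x) := by field_simp; ring
  have key : x ≤ (1 + C) * (x / (1+x)) := by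
    rw [← mul_div_assoc, le_div_iff₀ h1x]
    nlinarith
  have h6 : (1 + C) * (x / (1+x)) ≤ (1 + C) * Real.log (1+x) := by
    rw [← h3]
    exact mul_le_mul_of_nonneg_left h1 (by linarith)
  linarith

end Aux

/-- Given `σ > 0`, a positive definite `Σ₀`, and vectors `A₁,…,Aₙ` with `‖A_t‖₂ ≤ κ`,
let `V_t = Σ_{ℓ=1}^{t−1} A_ℓ A_ℓᵀ` and `Σ_t = (Σ₀⁻¹ + σ⁻² V_t)⁻¹`. If `C > 0` satisfies
`λ_max(Σ₀) ≤ σ² C / κ²`, then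
`Σ_{t=1}^n ‖A_t‖²_{Σ_t} ≤ σ² (1 + C) log(det(Σ_{n+1}⁻¹)/det(Σ₁⁻¹))`. -/
theorem sum_posterior_norm_sq_le {d n : ℕ} (σ κ C : ℝ) (hσ : 0 < σ)
    (S0 : Matrix (Fin d) (Fin d) ℝ) (hS0 : S0.PosDef)
    (A : ℕ → Fin d → ℝ)
    (hA : ∀ t ∈ Finset.Icc 1 n, Real.sqrt (A t ⬝ᵥ A t) ≤ κ)
    (V : ℕ → Matrix (Fin d) (Fin d) ℝ)
    (hV : ∀ t, V t = ∑ ℓ ∈ Finset.Ico 1 t, Matrix.vecMulVec (A ℓ) (A ℓ))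
    (Sig : ℕ → Matrix (Fin d) (Fin d) ℝ)
    (hSig : ∀ t, Sig t = (S0⁻¹ + (σ ^ 2)⁻¹ • V t)⁻¹)
    (hC : 0 < C)
    (hCbound : (⨆ i, hS0.1.eigenvalues i) ≤ σ ^ 2 * C / κ ^ 2) :
    ∑ t ∈ Finset.Icc 1 n, A t ⬝ᵥ (Sig t).mulVec (A t) ≤
      σ ^ 2 * (1 + C) * Real.log ((Sig (n + 1))⁻¹.det / (Sig 1)⁻¹.det) := by
  classical
  have hσ2 : (0:ℝ) < σ ^ 2 := by positivity
  set M : ℕ → Matrix (Fin d) (Fin d) ℝ := fun t => S0⁻¹ + (σ ^ 2)⁻¹ • V t with hMdef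
  have hVpsd : ∀ t, ((σ ^ 2)⁻¹ • V t).PosSemidef := fun t => by
    rw [hV t]; exact psd_smul_aux (by positivity) (psd_sum_aux _ _)
  have hMpos : ∀ t, (M t).PosDef := fun t => hS0.inv.add_posSemidef (hVpsd t)
  have hdet : ∀ t, IsUnit (M t).det := fun t => (hMpos t).det_pos.ne'.isUnit
  have hInvInv : ∀ t, (Sig t)⁻¹ = M t := fun t => by
    rw [hSig t]; exact Matrix.nonsing_inv_nonsing_inv _ (hdet t)
  set w : ℕ → ℝ := fun t => A t ⬝ᵥ (M t)⁻¹ *ᵥ A t with hwdef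
  have hw0 : ∀ t, 0 ≤ w t := fun t => by
    have := (hMpos t).inv.posSemidef.dotProduct_mulVec_nonneg (A t)
    simpa using this
  -- determinant step
  have hstep : ∀ t, 1 ≤ t → (M (t+1)).det = (M t).det * (1 + (σ ^ 2)⁻¹ * w t) := by
    intro t ht
    have hvv : Matrix.replicateCol Unit ((σ ^ 2)⁻¹ • A t) * Matrix.replicateRow Unit (A t) =
        (σ ^ 2)⁻¹ • Matrix.vecMulVec (A t) (A t) := by
      rw [← Matrix.vecMulVec_eq]
      ext i j
      simp [Matrix.vecMulVec_apply, mul_assoc]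
    have hMt1 : M (t+1) = M t + Matrix.replicateCol Unit ((σ ^ 2)⁻¹ • A t) * Matrix.replicateRow Unit (A t) := by
      rw [hvv]
      show S0⁻¹ + (σ ^ 2)⁻¹ • V (t+1) = S0⁻¹ + (σ ^ 2)⁻¹ • V t + _
      rw [hV (t+1), hV t, Finset.sum_Ico_succ_top ht, smul_add, add_assoc]
    rw [hMt1, Matrix.det_add_replicateCol_mul_replicateRow (hdet t)]
    congr 1
    rw [Matrix.det_unique]
    have : (Matrix.replicateRow Unit (A t) * (M t)⁻¹ * Matrix.replicateCol Unit ((σ ^ 2)⁻¹ • A t)) =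
        Matrix.replicateRow Unit (A t ᵥ* (M t)⁻¹) * Matrix.replicateCol Unit ((σ ^ 2)⁻¹ • A t) := by
      rw [Matrix.replicateRow_vecMul]
    rw [Matrix.add_apply, Matrix.one_apply_eq, this, Matrix.replicateRow_mul_replicateCol_apply,
      ← Matrix.dotProduct_mulVec, Matrix.mulVec_smul, dotProduct_smul, smul_eq_mul]
  -- product formula
  have hprod : ∀ m, (M (m+1)).det = (M 1).det * ∏ t ∈ Finset.Icc 1 m, (1 + (σ ^ 2)⁻¹ * w t) := by
    intro m
    induction m with
    | zero => simp
    | succ k ih =>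
      rw [hstep (k+1) (Nat.succ_le_succ (Nat.zero_le k)), ih,
        Finset.prod_Icc_succ_top (Nat.succ_le_succ (Nat.zero_le k)), mul_assoc]
  have hfac : ∀ t, 0 < 1 + (σ ^ 2)⁻¹ * w t := fun t =>
    add_pos_of_pos_of_nonneg one_pos (mul_nonneg (by positivity) (hw0 t))
  have hlog : Real.log ((M (n+1)).det / (M 1).det) =
      ∑ t ∈ Finset.Icc 1 n, Real.log (1 + (σ ^ 2)⁻¹ * w t) := by
    rw [hprod n, mul_div_cancel_left₀ _ (hMpos 1).det_pos.ne',
      Real.log_prod (fun t _ => (hfac t).ne')]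
  -- per-term bound
  have hterm : ∀ t ∈ Finset.Icc 1 n,
      w t ≤ σ ^ 2 * (1 + C) * Real.log (1 + (σ ^ 2)⁻¹ * w t) := by
    intro t ht
    have hwC : w t ≤ σ ^ 2 * C := by
      by_cases hA0 : A t = 0
      · have : w t = 0 := by simp [hwdef, hA0]
        rw [this]; positivity
      · have hAA : 0 < A t ⬝ᵥ A t := by
          obtain ⟨i, hi⟩ := Function.ne_iff.mp hA0
          have : A t ⬝ᵥ A t = ∑ j, A t j * A t j := rfl
          rw [this]
          exact Finset.sum_pos' (fun j _ => mul_self_nonneg _)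
            ⟨i, Finset.mem_univ _, mul_self_pos.mpr hi⟩
        have hκ : 0 < κ := lt_of_lt_of_le (Real.sqrt_pos.mpr hAA) (hA t ht)
        have hAAκ : A t ⬝ᵥ A t ≤ κ ^ 2 := by
          nlinarith [Real.sq_sqrt hAA.le, hA t ht, Real.sqrt_nonneg (A t ⬝ᵥ A t)]
        -- w t ≤ A ⬝ S0 A
        have key : w t ≤ A t ⬝ᵥ S0 *ᵥ A t := by
          set x := (M t)⁻¹ *ᵥ A t with hxdef
          have hMx : M t *ᵥ x = A t := by
            rw [hxdef, Matrix.mulVec_mulVec, Matrix.mul_nonsing_inv _ (hdet t),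
              Matrix.one_mulVec]
          have e1 : w t = x ⬝ᵥ A t := dotProduct_comm _ _
          have e2 : x ⬝ᵥ M t *ᵥ x = x ⬝ᵥ A t := by rw [hMx]
          have h2 : x ⬝ᵥ S0⁻¹ *ᵥ x ≤ x ⬝ᵥ M t *ᵥ x := by
            have hps := (hVpsd t).dotProduct_mulVec_nonneg x
            have hsx : star x = x := by simp
            rw [hsx] at hps
            have : M t *ᵥ x = S0⁻¹ *ᵥ x + ((σ ^ 2)⁻¹ • V t) *ᵥ x := by
              rw [hMdef]; exact Matrix.add_mulVec _ _ _
            rw [this, dotProduct_add]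
            linarith
          have h3 : 2 * (x ⬝ᵥ A t) - x ⬝ᵥ S0⁻¹ *ᵥ x ≤ A t ⬝ᵥ S0 *ᵥ A t := by
            set y := x - S0 *ᵥ A t with hydef
            have h0 := hS0.inv.posSemidef.dotProduct_mulVec_nonneg y
            have hsy : star y = y := by simp
            rw [hsy] at h0
            have hBS : S0⁻¹ *ᵥ (S0 *ᵥ A t) = A t := by
              rw [Matrix.mulVec_mulVec, Matrix.nonsing_inv_mul _ hS0.det_pos.ne'.isUnit,
                Matrix.one_mulVec]
            have hsym : (S0 *ᵥ A t) ⬝ᵥ S0⁻¹ *ᵥ x = x ⬝ᵥ S0⁻¹ *ᵥ (S0 *ᵥ A t) :=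
              dot_symm_aux hS0.inv.1 _ _
            rw [hydef, Matrix.mulVec_sub, sub_dotProduct, dotProduct_sub,
              dotProduct_sub, hsym, hBS] at h0
            have hc2 : (S0 *ᵥ A t) ⬝ᵥ A t = A t ⬝ᵥ S0 *ᵥ A t := dotProduct_comm _ _
            rw [hc2] at h0
            linarith
          linarith [e1, e2, h2, h3]
        have spec := quad_le_sup_eigenvalues hS0.1 (A t)
        have h5 : (⨆ i, hS0.1.eigenvalues i) * (A t ⬝ᵥ A t) ≤
            (σ ^ 2 * C / κ ^ 2) * (A t ⬝ᵥ A t) :=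
          mul_le_mul_of_nonneg_right hCbound hAA.le
        have h6 : (σ ^ 2 * C / κ ^ 2) * (A t ⬝ᵥ A t) ≤ (σ ^ 2 * C / κ ^ 2) * κ ^ 2 :=
          mul_le_mul_of_nonneg_left hAAκ (by positivity)
        have h7 : (σ ^ 2 * C / κ ^ 2) * κ ^ 2 = σ ^ 2 * C :=
          div_mul_cancel₀ _ (by positivity)
        linarith
    have hx0 : 0 ≤ (σ ^ 2)⁻¹ * w t := mul_nonneg (by positivity) (hw0 t)
    have hxC : (σ ^ 2)⁻¹ * w t ≤ C := by
      have h8 : (σ ^ 2)⁻¹ * w t ≤ (σ ^ 2)⁻¹ * (σ ^ 2 * C) :=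
        mul_le_mul_of_nonneg_left hwC (by positivity)
      rwa [← mul_assoc, inv_mul_cancel₀ hσ2.ne', one_mul] at h8
    have hlb := le_log_bound hx0 hxC
    calc w t = σ ^ 2 * ((σ ^ 2)⁻¹ * w t) := by field_simp
      _ ≤ σ ^ 2 * ((1 + C) * Real.log (1 + (σ ^ 2)⁻¹ * w t)) :=
          mul_le_mul_of_nonneg_left hlb hσ2.le
      _ = σ ^ 2 * (1 + C) * Real.log (1 + (σ ^ 2)⁻¹ * w t) := by ring
  calc ∑ t ∈ Finset.Icc 1 n, A t ⬝ᵥ (Sig t).mulVec (A t)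
      = ∑ t ∈ Finset.Icc 1 n, w t := by
        refine Finset.sum_congr rfl fun t _ => ?_
        rw [hSig t]
    _ ≤ ∑ t ∈ Finset.Icc 1 n, σ ^ 2 * (1 + C) * Real.log (1 + (σ ^ 2)⁻¹ * w t) :=
        Finset.sum_le_sum hterm
    _ = σ ^ 2 * (1 + C) * ∑ t ∈ Finset.Icc 1 n, Real.log (1 + (σ ^ 2)⁻¹ * w t) := by
        rw [Finset.mul_sum]
    _ = σ ^ 2 * (1 + C) * Real.log ((Sig (n + 1))⁻¹.det / (Sig 1)⁻¹.det) := by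
        rw [hInvInv, hInvInv, hlog]
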